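/- Let T be a finite set of 3D items with all dimensions in (0,1], and suppose T can be packed into the strip [0,1]×[0,1]×[0,H] for some real H ≥ 1. Then T can be partitioned into at most 2·⌈H⌉ parts, each of which can be packed into the unit cube bin [0,1]^3. -/
import Mathlib


/-- The open region occupied by a 3D item of width `w`, depth `d`, height `h`
placed with its bottom-left-back corner at `(x, y, z)`. -/
def ItemRegion (w d h x y z : ℝ) : Set (ℝ × ℝ × ℝ) :=
  Set.Ioo x (x + w) ×ˢ (Set.Ioo y (y + d) ×ˢ Set.Ioo z (z + h))

/-- `IsPacking T w d h W D H x y z` : the placement `(x, y, z)` is a feasible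
axis-aligned non-overlapping packing of the items of `T` (with dimensions
`w`, `d`, `h`) into the box `[0,W] × [0,D] × [0,H]`. -/
def IsPacking {ι : Type*} (T : Finset ι) (w d h : ι → ℝ) (W D H : ℝ)
    (x y z : ι → ℝ) : Prop :=
  (∀ i ∈ T, 0 ≤ x i ∧ x i + w i ≤ W ∧ 0 ≤ y i ∧ y i + d i ≤ D ∧
      0 ≤ z i ∧ z i + h i ≤ H) ∧
  (∀ i ∈ T, ∀ j ∈ T, i ≠ j →
    Disjoint (ItemRegion (w i) (d i) (h i) (x i) (y i) (z i))
             (ItemRegion (w j) (d j) (h j) (x j) (y j) (z j)))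

/-- The items of `T` can be packed into the box `[0,W] × [0,D] × [0,H]`. -/
def CanPack {ι : Type*} (T : Finset ι) (w d h : ι → ℝ) (W D H : ℝ) : Prop :=
  ∃ x y z : ι → ℝ, IsPacking T w d h W D H x y z

lemma mem_ItemRegion {w d h x y z : ℝ} {p : ℝ × ℝ × ℝ} :
    p ∈ ItemRegion w d h x y z ↔
      (x < p.1 ∧ p.1 < x + w) ∧ (y < p.2.1 ∧ p.2.1 < y + d) ∧
      (z < p.2.2 ∧ p.2.2 < z + h) := by
  simp [ItemRegion, Set.mem_prod, Set.mem_Ioo]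

lemma region_disj_shift {w d h x y z w' d' h' x' y' z' c : ℝ}
    (hd : Disjoint (ItemRegion w d h x y z) (ItemRegion w' d' h' x' y' z')) :
    Disjoint (ItemRegion w d h x y (z - c)) (ItemRegion w' d' h' x' y' (z' - c)) := by
  rw [Set.disjoint_left] at hd ⊢
  rintro ⟨a, b, e⟩ hp hq
  rw [mem_ItemRegion] at hp hq
  dsimp only at hp hq
  obtain ⟨⟨p1, p2⟩, ⟨p3, p4⟩, p5, p6⟩ := hp
  obtain ⟨⟨q1, q2⟩, ⟨q3, q4⟩, q5, q6⟩ := hq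
  refine hd (a := (a, b, e + c)) (mem_ItemRegion.mpr ?_) (mem_ItemRegion.mpr ?_) <;>
    dsimp only <;> exact ⟨⟨by linarith, by linarith⟩, ⟨by linarith, by linarith⟩,
      by linarith, by linarith⟩

lemma region_disj_slice {w d h x y z w' d' h' x' y' z' m : ℝ}
    (hm1 : z < m) (hm2 : m < z + h) (hm3 : z' < m) (hm4 : m < z' + h')
    (hd : Disjoint (ItemRegion w d h x y z) (ItemRegion w' d' h' x' y' z')) :
    Disjoint (ItemRegion w d h x y 0) (ItemRegion w' d' h' x' y' 0) := by
  rw [Set.disjoint_left] at hd ⊢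
  rintro ⟨a, b, e⟩ hp hq
  rw [mem_ItemRegion] at hp hq
  dsimp only at hp hq
  refine hd (a := (a, b, m)) (mem_ItemRegion.mpr ?_) (mem_ItemRegion.mpr ?_) <;> dsimp only
  · exact ⟨hp.1, hp.2.1, hm1, hm2⟩
  · exact ⟨hq.1, hq.2.1, hm3, hm4⟩

/-- If a finite set `T` of 3D items with all dimensions in
`(0,1]` packs into the strip `[0,1] × [0,1] × [0,H]` with `H ≥ 1`, then `T`
can be split into at most `2·⌈H⌉` parts each of which packs into the unit
cube bin. -/
theorem stmt7 {ι : Type*} (T : Finset ι) (w d h : ι → ℝ) (H : ℝ) (hH : 1 ≤ H)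
    (hdims : ∀ i ∈ T, 0 < w i ∧ w i ≤ 1 ∧ 0 < d i ∧ d i ≤ 1 ∧
      0 < h i ∧ h i ≤ 1)
    (hpack : CanPack T w d h 1 1 H) :
    ∃ f : ι → Fin (2 * ⌈H⌉₊), ∀ b : Fin (2 * ⌈H⌉₊),
      CanPack (T.filter fun i => f i = b) w d h 1 1 1 := by
  obtain ⟨x, y, z, hbnd, hdisj⟩ := hpack
  have hC : 0 < 2 * ⌈H⌉₊ := by
    have : 0 < ⌈H⌉₊ := Nat.ceil_pos.mpr (by linarith)
    omega
  set n : ι → ℕ :=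
    fun i => 2 * ⌊z i⌋₊ + (if z i + h i ≤ (⌊z i⌋₊ : ℝ) + 1 then 0 else 1) with hn
  have hlt : ∀ i ∈ T, n i < 2 * ⌈H⌉₊ := by
    intro i hi
    have h1 := (hbnd i hi).2.2.2.2
    have hh := (hdims i hi).2.2.2.2.1
    have hz0 : 0 ≤ z i := h1.1
    have hzH : z i < H := by linarith [h1.2]
    have hzc : z i < (⌈H⌉₊ : ℝ) := lt_of_lt_of_le hzH (Nat.le_ceil H)
    have hfloor : ⌊z i⌋₊ < ⌈H⌉₊ := (Nat.floor_lt hz0).mpr hzc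
    simp only [hn]
    split <;> omega
  set f : ι → Fin (2 * ⌈H⌉₊) :=
    fun i => if hi : n i < 2 * ⌈H⌉₊ then ⟨n i, hi⟩ else ⟨0, hC⟩ with hf
  refine ⟨f, fun b => ?_⟩
  refine ⟨x, y, fun i => if z i + h i ≤ (⌊z i⌋₊ : ℝ) + 1 then z i - ⌊z i⌋₊ else 0,
    ?_, ?_⟩
  · intro i hi
    have hiT := (Finset.mem_filter.mp hi).1
    have h1 := hbnd i hiT
    have hd := hdims i hiT
    have hz0 : 0 ≤ z i := h1.2.2.2.2.1
    have hfl : (⌊z i⌋₊ : ℝ) ≤ z i := Nat.floor_le hz0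
    refine ⟨h1.1, h1.2.1, h1.2.2.1, h1.2.2.2.1, ?_, ?_⟩ <;>
      · dsimp only
        split <;> linarith [hd.2.2.2.2.2]
  · intro i hi j hj hij
    have hiT := (Finset.mem_filter.mp hi).1
    have hjT := (Finset.mem_filter.mp hj).1
    have hfi : f i = b := (Finset.mem_filter.mp hi).2
    have hfj : f j = b := (Finset.mem_filter.mp hj).2
    have hni : n i = n j := by
      have hi' := hlt i hiT
      have hj' := hlt j hjT
      have hv : (f i : ℕ) = (f j : ℕ) := by rw [hfi, hfj]
      rw [hf] at hv
      simpa [dif_pos hi', dif_pos hj'] using hv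
    have hdij := hdisj i hiT j hjT hij
    by_cases Hi : z i + h i ≤ (⌊z i⌋₊ : ℝ) + 1 <;>
      by_cases Hj : z j + h j ≤ (⌊z j⌋₊ : ℝ) + 1
    · -- both in slab
      have hk : ⌊z i⌋₊ = ⌊z j⌋₊ := by
        simp only [hn, if_pos Hi, if_pos Hj] at hni; omega
      simp only [if_pos Hi, if_pos Hj]
      rw [hk]
      exact region_disj_shift hdij
    · simp only [hn, if_pos Hi, if_neg Hj] at hni; omega
    · simp only [hn, if_neg Hi, if_pos Hj] at hni; omega
    · -- both cross level ⌊z i⌋+1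
      have hk : ⌊z i⌋₊ = ⌊z j⌋₊ := by
        simp only [hn, if_neg Hi, if_neg Hj] at hni; omega
      simp only [if_neg Hi, if_neg Hj]
      have h2i : z i < (⌊z i⌋₊ : ℝ) + 1 := Nat.lt_floor_add_one (z i)
      have h2j : z j < (⌊z j⌋₊ : ℝ) + 1 := Nat.lt_floor_add_one (z j)
      exact region_disj_slice (m := (⌊z i⌋₊ : ℝ) + 1) h2i (by linarith)
        (by rw [hk]; exact h2j) (by rw [hk] at Hi ⊢; linarith) hdij
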